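/- Let c > 0, and let p, q, r, s, f₂, f₃, f₄ be real numbers with q > 0, s > 0, rq − ps > 0, and m := rq − ps + s − q > 0 (so that the four points (0,0), (1,0), (r,s), (p,q) form a strictly convex quadrilateral). Define the roughness difference D := (s/2)·(c·f₂² + (f₃ − r·f₂)²/(c·s²)) + ((rq−ps)/2)·(c·(q·f₃ − s·f₄)²/(rq−ps)² + (r·f₄ − p·f₃)²/(c·(rq−ps)²)) − (q/2)·(c·f₂² + (f₄ − p·f₂)²/(c·q²)) − (m/2)·(c·(q·(f₃−f₂) − s·(f₄−f₂))²/m² + ((r−1)·(f₄−f₂) − (p−1)·(f₃−f₂))²/(c·m²)). Then D = (q·f₃ + (ps − rq)·f₂ − s·f₄)² · (p·s·(1−p) − c²q²s + q·(c²s² + r² − r)) / (2·c·q·m·s·(rq−ps)). -/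

import Mathlib

/-- The roughness difference `D` between the triangulation `𝕋* = {(u₁',u₂',u₃'),
(u₁',u₃',u₄')}` and the triangulation `𝕋 = {(u₁',u₂',u₄'), (u₂',u₃',u₄')}` of the
convex quadrilateral `u₁' = (0,0)`, `u₂' = (1,0)`, `u₃' = (r,s)`, `u₄' = (p,q)`, for
interpolation values `0, f₂, f₃, f₄` and characteristic speed `c`. -/
noncomputable def roughnessDiff (c p q r s f₂ f₃ f₄ : ℝ) : ℝ :=
  (s / 2) * (c * f₂ ^ 2 + (f₃ - r * f₂) ^ 2 / (c * s ^ 2)) +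
    ((r * q - p * s) / 2) *
      (c * (q * f₃ - s * f₄) ^ 2 / (r * q - p * s) ^ 2 +
        (r * f₄ - p * f₃) ^ 2 / (c * (r * q - p * s) ^ 2)) -
    (q / 2) * (c * f₂ ^ 2 + (f₄ - p * f₂) ^ 2 / (c * q ^ 2)) -
    ((r * q - p * s + s - q) / 2) *
      (c * (q * (f₃ - f₂) - s * (f₄ - f₂)) ^ 2 / (r * q - p * s + s - q) ^ 2 +
        ((r - 1) * (f₄ - f₂) - (p - 1) * (f₃ - f₂)) ^ 2 /
          (c * (r * q - p * s + s - q) ^ 2))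

/-- Under strict convexity of the quadrilateral, the roughness difference factors as
`D = (q·f₃ + (ps − rq)·f₂ − s·f₄)² · (ps(1−p) − c²q²s + q(c²s² + r² − r)) /
(2·c·q·m·s·(rq−ps))` where `m = rq − ps + s − q`. -/
theorem roughnessDiff_factorization (c p q r s f₂ f₃ f₄ : ℝ) (hc : 0 < c)
    (hq : 0 < q) (hs : 0 < s) (hrqps : 0 < r * q - p * s)
    (hm : 0 < r * q - p * s + s - q) :
    roughnessDiff c p q r s f₂ f₃ f₄ =
      (q * f₃ + (p * s - r * q) * f₂ - s * f₄) ^ 2 *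
          (p * s * (1 - p) - c ^ 2 * q ^ 2 * s + q * (c ^ 2 * s ^ 2 + r ^ 2 - r)) /
        (2 * c * q * (r * q - p * s + s - q) * s * (r * q - p * s)) := by
  have hc' := hc.ne'
  have hq' := hq.ne'
  have hs' := hs.ne'
  have h1 := hrqps.ne'
  have h2 := hm.ne'
  have h1' : r * q - s * p ≠ 0 := by rw [mul_comm s p]; exact h1
  have h2' : r * q - s * p + s - q ≠ 0 := by rw [mul_comm s p]; exact h2
  unfold roughnessDiff
  field_simp
  ring
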